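/- As p → 2⁺, the quantity 2^{2p/(p−2)} √(p−2) · c_p converges to √(2π), where c_p = ∫_0^1 (1 + s^{(p−2)/p})^{−2p/(p−2)} ds. -/

import Mathlib

open Real Filter Set intervalIntegral

open Real Filter intervalIntegral Set

-- real beta
lemma real_beta {u v : ℝ} (hu : 0 < u) (hv : 0 < v) :
    ∫ x in (0:ℝ)..1, x ^ (u - 1) * (1 - x) ^ (v - 1)
      = Real.Gamma u * Real.Gamma v / Real.Gamma (u + v) := by
  have h := Complex.Gamma_mul_Gamma_eq_betaIntegral (s := u) (t := v)
    (by simpa using hu) (by simpa using hv)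
  have key : Complex.betaIntegral u v
      = ((∫ x in (0:ℝ)..1, x ^ (u - 1) * (1 - x) ^ (v - 1) : ℝ) : ℂ) := by
    rw [Complex.betaIntegral, ← intervalIntegral.integral_ofReal]
    refine intervalIntegral.integral_congr fun x hx => ?_
    rw [Set.uIcc_of_le (by norm_num : (0:ℝ) ≤ 1)] at hx
    rw [Complex.ofReal_mul, Complex.ofReal_cpow hx.1, Complex.ofReal_cpow (by linarith [hx.2] : (0:ℝ) ≤ 1 - x)]
    push_cast; ring
  have hG : Complex.Gamma ((u:ℂ) + v) = (Real.Gamma (u+v) : ℂ) := by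
    rw [← Complex.ofReal_add, Complex.Gamma_ofReal]
  rw [key, hG, Complex.Gamma_ofReal, Complex.Gamma_ofReal, ← Complex.ofReal_mul,
    ← Complex.ofReal_mul] at h
  have := Complex.ofReal_injective h
  have hGpos : 0 < Real.Gamma (u + v) := Real.Gamma_pos_of_pos (by linarith)
  field_simp
  linarith [this]
open Real Filter Set

lemma gamma_half_sq {x : ℝ} (hx : 0 < x) :
    Real.Gamma (x + 1/2) ^ 2 ≤ x * Real.Gamma x ^ 2 := by
  have h := Real.convexOn_log_Gamma.2 (Set.mem_Ioi.2 hx)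
    (Set.mem_Ioi.2 (by linarith : (0:ℝ) < x + 1))
    (by norm_num : (0:ℝ) ≤ 1/2) (by norm_num : (0:ℝ) ≤ 1/2) (by norm_num)
  simp only [smul_eq_mul, Function.comp_apply] at h
  have hmid : (1/2 : ℝ) * x + 1/2 * (x+1) = x + 1/2 := by ring
  rw [hmid] at h
  have hg1 : 0 < Real.Gamma x := Real.Gamma_pos_of_pos hx
  have hg2 : 0 < Real.Gamma (x + 1/2) := Real.Gamma_pos_of_pos (by linarith)
  have hg3 : Real.Gamma (x+1) = x * Real.Gamma x := by
    rw [Real.Gamma_add_one (ne_of_gt hx)]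
  have h2 : Real.log (Real.Gamma (x+1/2) ^ 2) ≤ Real.log (x * Real.Gamma x ^ 2) := by
    rw [Real.log_pow]
    have : Real.log (x * Real.Gamma x ^ 2) = Real.log x + 2 * Real.log (Real.Gamma x) := by
      rw [Real.log_mul (ne_of_gt hx) (by positivity), Real.log_pow]; push_cast; ring
    rw [this]
    have hlg : Real.log (Real.Gamma (x+1)) = Real.log x + Real.log (Real.Gamma x) := by
      rw [hg3, Real.log_mul (ne_of_gt hx) (ne_of_gt hg1)]
    push_cast
    nlinarith [h, hlg]
  exact (Real.log_le_log_iff (by positivity) (by positivity)).mp h2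
open Real Filter Set intervalIntegral

lemma subst_lemma {m : ℝ} (hm : 1 < m) :
    ∫ s in (0:ℝ)..1, (1 + s ^ (1/m)) ^ (-(2*m))
      = ∫ u in (0:ℝ)..(1/2), m * u ^ (m-1) * (1-u) ^ (m-1) := by
  have hm0 : 0 < m := by linarith
  set h : ℝ → ℝ := fun u => (u / (1-u)) ^ m with hh
  set h' : ℝ → ℝ := fun u => ((1-u)^2)⁻¹ * m * (u/(1-u)) ^ (m-1) with hh'
  set G : ℝ → ℝ := fun s => (1 + s ^ (1/m)) ^ (-(2*m)) with hG
  have huIcc : Set.uIcc (0:ℝ) (1/2) = Icc (0:ℝ) (1/2) := uIcc_of_le (by norm_num)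
  have hbase : ∀ u ∈ Icc (0:ℝ) (1/2), 0 ≤ u / (1-u) ∧ u / (1-u) ≤ 1 ∧ (0:ℝ) < 1 - u := by
    intro u hu
    have h1 : (0:ℝ) < 1 - u := by linarith [hu.2]
    refine ⟨div_nonneg hu.1 h1.le, ?_, h1⟩
    rw [div_le_one h1]; linarith [hu.2]
  have hcont_base : ContinuousOn (fun u : ℝ => u / (1-u)) (Icc (0:ℝ) (1/2)) :=
    continuousOn_id.div (by fun_prop) (fun x hx => by nlinarith [(hbase x hx).2.2])
  have hcont_h : ContinuousOn h (Set.uIcc (0:ℝ) (1/2)) := by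
    rw [huIcc]
    exact ContinuousOn.rpow_const hcont_base (fun x hx => Or.inr hm0.le)
  have hderiv : ∀ x ∈ Ioo (min (0:ℝ) (1/2)) (max (0:ℝ) (1/2)),
      HasDerivWithinAt h (h' x) (Set.Ioi x) x := by
    intro x hx
    rw [min_def, max_def] at hx
    norm_num at hx
    have h1 : (0:ℝ) < 1 - x := by linarith [hx.2]
    have hd : HasDerivAt (fun u : ℝ => u / (1-u)) (((1-x)^2)⁻¹) x := by
      have := (hasDerivAt_id x).div ((hasDerivAt_id x).const_sub 1) (ne_of_gt h1)
      exact this.congr_deriv (by simp only [id, one_mul, mul_neg, mul_one, sub_neg_eq_add, sub_add_cancel, one_div])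
    have h2 := hd.rpow_const (p := m) (Or.inl (ne_of_gt (div_pos hx.1 h1)))
    have : ((1-x)^2)⁻¹ * m * (x/(1-x)) ^ (m-1) = ((1-x)^2)⁻¹ * m * (x / (1-x)) ^ (m - 1) := rfl
    exact (h2.hasDerivWithinAt)
  have hcont_h' : ContinuousOn h' (Set.uIcc (0:ℝ) (1/2)) := by
    rw [huIcc]
    refine ContinuousOn.mul (ContinuousOn.mul (ContinuousOn.inv₀ (by fun_prop) ?_)
      continuousOn_const) ?_
    · intro x hx
      have := (hbase x hx).2.2
      positivity
    · exact ContinuousOn.rpow_const hcont_base (fun x hx => Or.inr (by linarith))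
  have himage : h '' Set.uIcc (0:ℝ) (1/2) ⊆ Icc (0:ℝ) 1 := by
    rw [huIcc]
    rintro _ ⟨u, hu, rfl⟩
    obtain ⟨hb0, hb1, hb2⟩ := hbase u hu
    exact ⟨Real.rpow_nonneg hb0 m, Real.rpow_le_one hb0 hb1 hm0.le⟩
  have hcont_G : ContinuousOn G (Icc (0:ℝ) 1) := by
    refine ContinuousOn.rpow_const (continuousOn_const.add
      (ContinuousOn.rpow_const continuousOn_id (fun x hx => Or.inr (by positivity)))) ?_
    intro x hx
    left
    have : (0:ℝ) ≤ x ^ (1/m) := Real.rpow_nonneg hx.1 _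
    positivity
  have key := integral_comp_smul_deriv'' (a := (0:ℝ)) (b := 1/2) hcont_h hderiv hcont_h'
    (hcont_G.mono himage)
  have h0 : h 0 = 0 := by simp [hh, Real.zero_rpow (ne_of_gt hm0)]
  have h12 : h (1/2) = 1 := by norm_num [hh]
  rw [h0, h12] at key
  rw [← key]
  refine intervalIntegral.integral_congr fun u hu => ?_
  rw [huIcc] at hu
  obtain ⟨hb0, hb1, hb2⟩ := hbase u hu
  have hmm : ((u / (1-u)) ^ m) ^ (1/m) = u / (1-u) := by
    rw [← Real.rpow_mul hb0, mul_one_div, div_self (ne_of_gt hm0), Real.rpow_one]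
  simp only [smul_eq_mul, Function.comp_apply, hh, hh', hG]
  rw [hmm]
  have h1p : 1 + u / (1-u) = (1-u)⁻¹ := by field_simp; ring
  rw [h1p, Real.inv_rpow hb2.le, Real.rpow_neg hb2.le, inv_inv,
    Real.div_rpow hu.1 hb2.le]
  have hpow : ((1-u)^2)⁻¹ * ((1-u) ^ (2*m) / (1-u) ^ (m-1)) = (1-u) ^ (m-1) := by
    rw [← Real.rpow_natCast (1-u) 2, ← Real.rpow_sub hb2, ← Real.rpow_neg hb2.le,
      ← Real.rpow_add hb2]
    norm_num
    ring_nf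
  calc ((1-u)^2)⁻¹ * m * (u ^ (m-1) / (1-u) ^ (m-1)) * (1-u) ^ (2*m)
      = m * u ^ (m-1) * (((1-u)^2)⁻¹ * ((1-u) ^ (2*m) / (1-u) ^ (m-1))) := by ring
    _ = m * u ^ (m-1) * (1-u) ^ (m-1) := by rw [hpow]
open Real Filter Set intervalIntegral

lemma sym_lemma {m : ℝ} (hm : 1 < m) :
    ∫ u in (0:ℝ)..1, u ^ (m-1) * (1-u) ^ (m-1)
      = 2 * ∫ u in (0:ℝ)..(1/2), u ^ (m-1) * (1-u) ^ (m-1) := by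
  have hm1 : (0:ℝ) ≤ m - 1 := by linarith
  have hcont : Continuous (fun u : ℝ => u ^ (m-1) * (1-u) ^ (m-1)) := by
    refine Continuous.mul ?_ ?_
    · exact continuous_id.rpow_const (fun x => Or.inr hm1)
    · exact (continuous_const.sub continuous_id).rpow_const (fun x => Or.inr hm1)
  have hsplit := intervalIntegral.integral_add_adjacent_intervals
    (a := (0:ℝ)) (b := 1/2) (c := 1)
    (hcont.intervalIntegrable (μ := MeasureTheory.volume) (0:ℝ) (1/2)) (hcont.intervalIntegrable (μ := MeasureTheory.volume) (1/2:ℝ) 1)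
  have hflip : ∫ u in (1/2 : ℝ)..1, u ^ (m-1) * (1-u) ^ (m-1)
      = ∫ u in (0:ℝ)..(1/2), u ^ (m-1) * (1-u) ^ (m-1) := by
    have h1 : ∫ u in (1/2 : ℝ)..1, u ^ (m-1) * (1-u) ^ (m-1)
        = ∫ u in (1/2 : ℝ)..1, (1-u) ^ (m-1) * (1-(1-u)) ^ (m-1) := by
      refine intervalIntegral.integral_congr fun u hu => ?_
      have : 1 - (1-u) = u := by ring
      rw [this]; ring
    rw [h1]
    have h2 := intervalIntegral.integral_comp_sub_left
      (a := (1/2:ℝ)) (b := 1) (fun u => u ^ (m-1) * (1-u) ^ (m-1)) 1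
    norm_num at h2 ⊢
    exact h2
  rw [← hsplit, hflip]; ring
lemma alg {A B s t G1 G2 : ℝ} (hB : 0 < B) (ht : 0 < t) (hG1 : 0 < G1) (hG2 : 0 < G2)
    (h2 : A * B = 2) (m : ℝ) :
    A * s * (m * (G1 * G1 / (G1 * G2 / (B * t)) / 2)) = s * t * (m * G1 / G2) := by
  have hA : 0 < A := by nlinarith
  field_simp
  linear_combination (s * m) * h2

lemma eval_lemma {p : ℝ} (hp : 2 < p) :
    (2 : ℝ) ^ (2 * p / (p - 2)) * Real.sqrt (p - 2) *
        ∫ s in (0 : ℝ)..1, (1 + s ^ ((p - 2) / p)) ^ (-(2 * p) / (p - 2))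
      = Real.sqrt (p-2) * Real.sqrt π *
          (p/(p-2) * Real.Gamma (p/(p-2)) / Real.Gamma (p/(p-2) + 1/2)) := by
  have hp2 : (0:ℝ) < p - 2 := by linarith
  have hp0 : (0:ℝ) < p := by linarith
  set m : ℝ := p / (p-2) with hmdef
  have hm : 1 < m := (one_lt_div hp2).2 (by linarith)
  have hm0 : 0 < m := by linarith
  have he1 : (p - 2) / p = 1 / m := by rw [hmdef, one_div_div]
  have he2 : -(2 * p) / (p - 2) = -(2 * m) := by rw [hmdef]; field_simp
  have he3 : 2 * p / (p - 2) = 2 * m := by rw [hmdef]; ring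
  rw [he1, he2, he3, subst_lemma hm]
  have hpull : ∫ u in (0:ℝ)..(1/2), m * u ^ (m-1) * (1-u) ^ (m-1)
      = m * ∫ u in (0:ℝ)..(1/2), u ^ (m-1) * (1-u) ^ (m-1) := by
    rw [← intervalIntegral.integral_const_mul]
    exact intervalIntegral.integral_congr fun u _ => by ring
  rw [hpull]
  have hhalf : ∫ u in (0:ℝ)..(1/2), u ^ (m-1) * (1-u) ^ (m-1)
      = (∫ u in (0:ℝ)..1, u ^ (m-1) * (1-u) ^ (m-1)) / 2 := by
    rw [sym_lemma hm]; ring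
  rw [hhalf, real_beta hm0 hm0]
  have h2m : m + m = 2 * m := by ring
  rw [h2m]
  have hdup := Real.Gamma_mul_Gamma_add_half m
  have hG1 : 0 < Real.Gamma m := Real.Gamma_pos_of_pos hm0
  have hG2 : 0 < Real.Gamma (m + 1/2) := Real.Gamma_pos_of_pos (by linarith)
  have hG3 : 0 < Real.Gamma (2*m) := Real.Gamma_pos_of_pos (by linarith)
  have hB : (0:ℝ) < (2:ℝ) ^ (1 - 2*m) := Real.rpow_pos_of_pos two_pos _
  have h2 : (2:ℝ) ^ (2*m) * (2:ℝ) ^ (1 - 2*m) = 2 := by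
    rw [← Real.rpow_add two_pos]; norm_num
  have hG3' : Real.Gamma (2*m) = Real.Gamma m * Real.Gamma (m+1/2) /
      ((2:ℝ) ^ (1 - 2*m) * Real.sqrt π) := by
    rw [hdup]; field_simp
  rw [hG3']
  have hπ : (0:ℝ) < Real.sqrt π := Real.sqrt_pos.2 pi_pos
  exact alg hB hπ hG1 hG2 h2 m

lemma ratio_lower {m : ℝ} (hm0 : 0 < m) :
    Real.sqrt m ≤ m * Real.Gamma m / Real.Gamma (m + 1/2) := by
  have hG1 : 0 < Real.Gamma m := Real.Gamma_pos_of_pos hm0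
  have hG2 : 0 < Real.Gamma (m + 1/2) := Real.Gamma_pos_of_pos (by linarith)
  rw [le_div_iff₀ hG2]
  have hsq := gamma_half_sq hm0
  have h : (Real.sqrt m * Real.Gamma (m + 1/2))^2 ≤ (m * Real.Gamma m)^2 := by
    rw [mul_pow, Real.sq_sqrt hm0.le]
    nlinarith
  calc Real.sqrt m * Real.Gamma (m + 1/2)
      = Real.sqrt ((Real.sqrt m * Real.Gamma (m + 1/2))^2) :=
        (Real.sqrt_sq (by positivity)).symm
    _ ≤ Real.sqrt ((m * Real.Gamma m)^2) := Real.sqrt_le_sqrt h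
    _ = m * Real.Gamma m := Real.sqrt_sq (by positivity)

lemma ratio_upper {m : ℝ} (hm0 : 0 < m) :
    m * Real.Gamma m / Real.Gamma (m + 1/2) ≤ Real.sqrt (m + 1/2) := by
  have hG1 : 0 < Real.Gamma m := Real.Gamma_pos_of_pos hm0
  have hG2 : 0 < Real.Gamma (m + 1/2) := Real.Gamma_pos_of_pos (by linarith)
  rw [div_le_iff₀ hG2]
  have hsq := gamma_half_sq (x := m + 1/2) (by linarith)
  have hadd : m + 1/2 + 1/2 = m + 1 := by ring
  rw [hadd, Real.Gamma_add_one (ne_of_gt hm0)] at hsq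
  have h : (m * Real.Gamma m)^2 ≤ (Real.sqrt (m + 1/2) * Real.Gamma (m + 1/2))^2 := by
    nlinarith [Real.sq_sqrt (show (0:ℝ) ≤ m + 1/2 by linarith), hsq]
  calc m * Real.Gamma m
      = Real.sqrt ((m * Real.Gamma m)^2) := (Real.sqrt_sq (by positivity)).symm
    _ ≤ Real.sqrt ((Real.sqrt (m + 1/2) * Real.Gamma (m + 1/2))^2) := Real.sqrt_le_sqrt h
    _ = Real.sqrt (m + 1/2) * Real.Gamma (m + 1/2) := Real.sqrt_sq (by positivity)

/-- As `p → 2⁺`, `2^{2p/(p-2)} √(p-2) · c_p → √(2π)`, where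
`c_p = ∫_0^1 (1+s^{(p-2)/p})^{-2p/(p-2)} ds`. -/
theorem stmt_8 :
    Tendsto
      (fun p : ℝ => (2 : ℝ) ^ (2 * p / (p - 2)) * Real.sqrt (p - 2) *
        ∫ s in (0 : ℝ)..1, (1 + s ^ ((p - 2) / p)) ^ (-(2 * p) / (p - 2)))
      (nhdsWithin 2 (Set.Ioi 2)) (nhds (Real.sqrt (2 * π))) := by
  have hlo : Tendsto (fun p : ℝ => Real.sqrt (π * p)) (nhdsWithin 2 (Set.Ioi 2))
      (nhds (Real.sqrt (2 * π))) := by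
    have hc : Continuous fun p : ℝ => Real.sqrt (π * p) :=
      Real.continuous_sqrt.comp (continuous_const.mul continuous_id)
    have key : Real.sqrt (2 * π) = Real.sqrt (π * 2) := by rw [mul_comm]
    rw [key]
    exact (hc.tendsto 2).mono_left nhdsWithin_le_nhds
  have hhi : Tendsto (fun p : ℝ => Real.sqrt (π * ((3*p-2)/2))) (nhdsWithin 2 (Set.Ioi 2))
      (nhds (Real.sqrt (2 * π))) := by
    have hc : Continuous fun p : ℝ => Real.sqrt (π * ((3*p-2)/2)) := by
      apply Real.continuous_sqrt.comp; continuity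
    have key : Real.sqrt (2 * π) = Real.sqrt (π * ((3*(2:ℝ)-2)/2)) := by
      norm_num [mul_comm]
    rw [key]
    exact (hc.tendsto 2).mono_left nhdsWithin_le_nhds
  refine tendsto_of_tendsto_of_tendsto_of_le_of_le' hlo hhi ?_ ?_
  · filter_upwards [self_mem_nhdsWithin] with p hp
    have hp' : 2 < p := hp
    have hp2 : (0:ℝ) < p - 2 := by linarith
    rw [eval_lemma hp']
    have hm0 : 0 < p / (p-2) := by positivity
    have key : Real.sqrt (π * p) = Real.sqrt (p-2) * Real.sqrt π * Real.sqrt (p/(p-2)) := by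
      rw [show π * p = (p-2) * (π * (p/(p-2))) by field_simp,
        Real.sqrt_mul hp2.le, Real.sqrt_mul pi_pos.le, ← mul_assoc]
    rw [key]
    exact mul_le_mul_of_nonneg_left (ratio_lower hm0) (by positivity)
  · filter_upwards [self_mem_nhdsWithin] with p hp
    have hp' : 2 < p := hp
    have hp2 : (0:ℝ) < p - 2 := by linarith
    rw [eval_lemma hp']
    have hm0 : 0 < p / (p-2) := by positivity
    have key : Real.sqrt (π * ((3*p-2)/2))
        = Real.sqrt (p-2) * Real.sqrt π * Real.sqrt (p/(p-2) + 1/2) := by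
      rw [show π * ((3*p-2)/2) = (p-2) * (π * (p/(p-2) + 1/2)) by field_simp; ring,
        Real.sqrt_mul hp2.le, Real.sqrt_mul pi_pos.le, ← mul_assoc]
    rw [key]
    exact mul_le_mul_of_nonneg_left (ratio_upper hm0) (by positivity)
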